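/- arXiv:2602.03001 — 2 statements merged into one kernel-verified Lean document; each statement's English description precedes it below -/
import Mathlib

section
/- Let X be a random m×m real symmetric positive semidefinite matrix with integrable entries. Then E[tr(X^{1/2})] ≤ tr((E[X])^{1/2}), where M^{1/2} denotes the unique positive semidefinite square root of a positive semidefinite matrix M. -/
open MeasureTheory Matrix

namespace Matrix.PosSemidef

open scoped ComplexOrder

/-- The positive semidefinite square root of a positive semidefinite matrix
(removed from Mathlib; restored with its old definition). -/
noncomputable def sqrt {𝕜 : Type*} [RCLike 𝕜] {n : Type*} [Fintype n] [DecidableEq n]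
    {A : Matrix n n 𝕜} (hA : A.PosSemidef) : Matrix n n 𝕜 :=
  hA.1.eigenvectorUnitary.1 * Matrix.diagonal ((↑) ∘ (fun x => Real.sqrt x) ∘ hA.1.eigenvalues) *
    (star hA.1.eigenvectorUnitary : Matrix n n 𝕜)

lemma posSemidef_sqrt {n : Type*} [Fintype n] [DecidableEq n]
    {A : Matrix n n ℝ} (hA : A.PosSemidef) : hA.sqrt.PosSemidef := by
  have hd : (Matrix.diagonal ((↑) ∘ (fun x => Real.sqrt x) ∘ hA.1.eigenvalues) :
      Matrix n n ℝ).PosSemidef :=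
    Matrix.posSemidef_diagonal_iff.mpr fun i => Real.sqrt_nonneg _
  have := hd.mul_mul_conjTranspose_same (hA.1.eigenvectorUnitary : Matrix n n ℝ)
  rw [sqrt, Matrix.star_eq_conjTranspose]; exact this

lemma sqrt_mul_self {n : Type*} [Fintype n] [DecidableEq n]
    {A : Matrix n n ℝ} (hA : A.PosSemidef) : hA.sqrt * hA.sqrt = A := by
  have hU : (star hA.1.eigenvectorUnitary : Matrix n n ℝ) * hA.1.eigenvectorUnitary.1 = 1 :=
    Unitary.star_mul_self_of_mem hA.1.eigenvectorUnitary.2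
  conv_rhs => rw [hA.1.spectral_theorem]
  simp only [sqrt, Unitary.conjStarAlgAut_apply]
  set U := hA.1.eigenvectorUnitary.1
  set V : Matrix n n ℝ := star hA.1.eigenvectorUnitary
  set D : Matrix n n ℝ := Matrix.diagonal ((↑) ∘ (fun x => Real.sqrt x) ∘ hA.1.eigenvalues)
  have hDD : D * D = Matrix.diagonal (RCLike.ofReal ∘ hA.1.eigenvalues) := by
    simp only [D, Matrix.diagonal_mul_diagonal]
    congr 1; funext i
    simp [Real.mul_self_sqrt (hA.eigenvalues_nonneg i)]
  calc U * D * V * (U * D * V) = U * D * (V * U) * D * V := by simp only [mul_assoc]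
    _ = _ := by rw [hU, mul_one, mul_assoc U D D, hDD]

end Matrix.PosSemidef

section aux

variable {n : Type*} [Fintype n] [DecidableEq n]

lemma aux_trace_nonneg {A : Matrix n n ℝ} (hA : A.PosSemidef) : 0 ≤ A.trace := by
  rw [Matrix.trace]
  refine Finset.sum_nonneg fun i _ => ?_
  exact hA.diag_nonneg

lemma aux_trace_mul_nonneg {A B : Matrix n n ℝ} (hA : A.PosSemidef) (hB : B.PosSemidef) :
    0 ≤ (A * B).trace := by
  have h1 : A * B = hA.sqrt * (hA.sqrt * B) := by
    rw [← mul_assoc, hA.sqrt_mul_self]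
  have h2 : (A * B).trace = (hA.sqrt * B * hA.sqrt).trace := by
    rw [h1, Matrix.trace_mul_comm, mul_assoc]
  rw [h2]
  have hpsd : (hA.sqrtᴴ * B * hA.sqrt).PosSemidef := hB.conjTranspose_mul_mul_same hA.sqrt
  rw [hA.posSemidef_sqrt.isHermitian.eq] at hpsd
  exact aux_trace_nonneg hpsd

lemma aux_smul_one_posDef {δ : ℝ} (hδ : 0 < δ) : (δ • (1 : Matrix n n ℝ)).PosDef := by
  rw [Matrix.smul_one_eq_diagonal]
  exact Matrix.PosDef.diagonal fun _ => hδ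

lemma aux_key {A S : Matrix n n ℝ} (hA : A.PosSemidef) (hS : S.PosDef) :
    2 * hA.sqrt.trace ≤ (S * A).trace + S⁻¹.trace := by
  set B := hA.sqrt with hBdef
  set T := hS.posSemidef.sqrt with hTdef
  have hTT : T * T = S := hS.posSemidef.sqrt_mul_self
  have hTdet : IsUnit T.det := by
    have : T.det * T.det = S.det := by rw [← Matrix.det_mul, hTT]
    have hpos : (0:ℝ) < S.det := hS.det_pos
    refine isUnit_iff_ne_zero.mpr fun h => ?_
    rw [h, mul_zero] at this
    exact hpos.ne (this)
  have hRT : T⁻¹ * T = 1 := Matrix.nonsing_inv_mul _ hTdet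
  have hTR : T * T⁻¹ = 1 := Matrix.mul_nonsing_inv _ hTdet
  set R := T⁻¹ with hRdef
  have hBh : Bᴴ = B := hA.posSemidef_sqrt.isHermitian.eq
  have hTh : Tᴴ = T := hS.posSemidef.posSemidef_sqrt.isHermitian.eq
  have hRh : Rᴴ = R := by rw [hRdef, Matrix.conjTranspose_nonsing_inv, hTh]
  set C := T * B - R with hCdef
  have hCpsd : (C * Cᴴ).PosSemidef := Matrix.posSemidef_self_mul_conjTranspose C
  have h0 : 0 ≤ (C * Cᴴ).trace := aux_trace_nonneg hCpsd
  have hCH : Cᴴ = B * T - R := by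
    rw [hCdef, Matrix.conjTranspose_sub, Matrix.conjTranspose_mul, hBh, hTh, hRh]
  have hexp : (C * Cᴴ).trace
      = (S * A).trace - B.trace - B.trace + S⁻¹.trace := by
    rw [hCH, hCdef]
    rw [sub_mul, mul_sub, mul_sub, Matrix.trace_sub, Matrix.trace_sub, Matrix.trace_sub]
    have e1 : (T * B * (B * T)).trace = (S * A).trace := by
      have : T * B * (B * T) = T * (B * B) * T := by noncomm_ring
      rw [this, hA.sqrt_mul_self, Matrix.trace_mul_comm, ← mul_assoc, hTT]
    have e2 : (T * B * R).trace = B.trace := by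
      rw [Matrix.trace_mul_comm, ← mul_assoc, hRT, one_mul]
    have e3 : (R * (B * T)).trace = B.trace := by
      rw [← mul_assoc, Matrix.trace_mul_comm, ← mul_assoc, hTR, one_mul]
    have e4 : (R * R).trace = S⁻¹.trace := by
      rw [hRdef, ← Matrix.mul_inv_rev, hTT]
    rw [e1, e2, e3, e4]
    ring
  have := h0
  rw [hexp] at this
  linarith

end aux

/-- Let `X` be a random `m×m` real symmetric positive semidefinite matrix with integrable
entries.  Then `E[tr(X^{1/2})] ≤ tr((E[X])^{1/2})`, where `M^{1/2}` denotes the unique positive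
semidefinite square root of a positive semidefinite matrix `M`.
(The positive semidefiniteness of `E[X]`, recorded in the hypothesis `hEX`, is a consequence of
the other hypotheses, and is needed to state the square root of the expectation.) -/
theorem stmt3 {m : ℕ} {Ω : Type*} [MeasurableSpace Ω] (μ : Measure Ω) [IsProbabilityMeasure μ]
    (X : Ω → Matrix (Fin m) (Fin m) ℝ)
    (hX : ∀ ω, (X ω).PosSemidef)
    (hint : ∀ i j, Integrable (fun ω => X ω i j) μ)
    (hEX : (Matrix.of fun i j => ∫ ω, X ω i j ∂μ).PosSemidef) :
    ∫ ω, ((hX ω).sqrt).trace ∂μ ≤ hEX.sqrt.trace := by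
  set M : Matrix (Fin m) (Fin m) ℝ := Matrix.of fun i j => ∫ ω, X ω i j ∂μ with hMdef
  set B : Matrix (Fin m) (Fin m) ℝ := hEX.sqrt with hBdef
  have hB : B.PosSemidef := hEX.posSemidef_sqrt
  -- reduce to: for every δ > 0, the integral is ≤ B.trace + δ
  refine le_of_forall_pos_le_add fun ε hε => ?_
  set δ : ℝ := 2 * ε / (m + 1) with hδdef
  have hδ : 0 < δ := by positivity
  set D : Matrix (Fin m) (Fin m) ℝ := B + δ • 1 with hDdef
  have hD : D.PosDef := Matrix.PosDef.posSemidef_add hB (aux_smul_one_posDef hδ)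
  set S : Matrix (Fin m) (Fin m) ℝ := D⁻¹ with hSdef
  have hS : S.PosDef := hD.inv
  have hDdet : IsUnit D.det := hD.det_pos.ne'.isUnit
  have hSinv : S⁻¹ = D := Matrix.nonsing_inv_nonsing_inv _ hDdet
  -- integrability of the linear upper bound
  have htr_int : Integrable (fun ω => (S * X ω).trace) μ := by
    have : (fun ω => (S * X ω).trace)
        = fun ω => ∑ i, ∑ j, S i j * X ω j i := by
      funext ω
      simp [Matrix.trace, Matrix.mul_apply, Matrix.diag]
    rw [this]
    exact integrable_finset_sum _ fun i _ =>
      integrable_finset_sum _ fun j _ => (hint j i).const_mul (S i j)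
  have htr_eq : ∫ ω, (S * X ω).trace ∂μ = (S * M).trace := by
    have h1 : (fun ω => (S * X ω).trace)
        = fun ω => ∑ i, ∑ j, S i j * X ω j i := by
      funext ω
      simp [Matrix.trace, Matrix.mul_apply, Matrix.diag]
    rw [h1]
    rw [integral_finset_sum _ fun i _ =>
      integrable_finset_sum _ fun j _ => (hint j i).const_mul (S i j)]
    have : (S * M).trace = ∑ i, ∑ j, S i j * M j i := by
      simp [Matrix.trace, Matrix.mul_apply, Matrix.diag]
    rw [this]
    refine Finset.sum_congr rfl fun i _ => ?_
    rw [integral_finset_sum _ fun j _ => (hint j i).const_mul (S i j)]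
    refine Finset.sum_congr rfl fun j _ => ?_
    rw [integral_const_mul]
    rfl
  -- pointwise bound and integral monotonicity
  have hmono : ∫ ω, ((hX ω).sqrt).trace ∂μ
      ≤ ∫ ω, ((S * X ω).trace + S⁻¹.trace) / 2 ∂μ := by
    refine integral_mono_of_nonneg ?_ ((htr_int.add (integrable_const _)).div_const 2) ?_
    · exact Filter.Eventually.of_forall fun ω =>
        aux_trace_nonneg (hX ω).posSemidef_sqrt
    · refine Filter.Eventually.of_forall fun ω => ?_
      have := aux_key (hX ω) hS
      linarith
  have hint2 : ∫ ω, ((S * X ω).trace + S⁻¹.trace) / 2 ∂μ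
      = ((S * M).trace + S⁻¹.trace) / 2 := by
    rw [integral_div, integral_add htr_int (integrable_const _), htr_eq,
      integral_const, probReal_univ]
    simp
  -- estimate the RHS
  have hSMB : (S * M).trace ≤ B.trace := by
    have hMB : M = B * B := hEX.sqrt_mul_self.symm
    have h1 : S * D * B = 1 * B := by rw [hSdef, Matrix.nonsing_inv_mul _ hDdet]
    have h2 : S * D * B = S * (B * B) + δ • (S * B) := by
      rw [hDdef]
      simp only [mul_add, add_mul, Matrix.mul_smul, Matrix.smul_mul, mul_one, mul_assoc]
    have h3 : B.trace = (S * M).trace + δ * (S * B).trace := by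
      have := h1.symm.trans h2
      rw [one_mul] at this
      calc B.trace = (S * (B * B) + δ • (S * B)).trace := by rw [← this]
        _ = (S * M).trace + δ * (S * B).trace := by
            rw [Matrix.trace_add, Matrix.trace_smul, hMB, smul_eq_mul]
    have h4 : 0 ≤ (S * B).trace := aux_trace_mul_nonneg hS.posSemidef hB
    nlinarith
  have hSinvtr : S⁻¹.trace = B.trace + δ * m := by
    rw [hSinv, hDdef, Matrix.trace_add, Matrix.trace_smul, Matrix.trace_one, smul_eq_mul]
    simp
  have hδm : δ * m / 2 ≤ ε := by
    rw [hδdef]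
    rw [div_le_iff₀ (by norm_num : (0:ℝ) < 2)] at *
    have h1 : (m : ℝ) ≤ (m : ℝ) + 1 := by linarith
    have h2 : (0:ℝ) < (m:ℝ) + 1 := by positivity
    calc 2 * ε / (↑m + 1) * ↑m = 2 * ε * (↑m / (↑m + 1)) := by ring
      _ ≤ 2 * ε * 1 := by
          refine mul_le_mul_of_nonneg_left ?_ (by positivity)
          rw [div_le_one h2]; exact h1
      _ = ε * 2 := by ring
  calc ∫ ω, ((hX ω).sqrt).trace ∂μ
      ≤ ((S * M).trace + S⁻¹.trace) / 2 := by rw [← hint2]; exact hmono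
    _ ≤ (B.trace + (B.trace + δ * m)) / 2 := by
        rw [hSinvtr]; linarith
    _ = B.trace + δ * m / 2 := by ring
    _ ≤ B.trace + ε := by linarith
end

section
/- Let L : ℝ^d → ℝ be differentiable, L∞-smooth with respect to the ℓ∞ norm, and bounded below with infimum L*. Let θ ∈ (0,1) and K ≥ 1. On a probability space, let (x_k) be random vectors with x_0 deterministic and x_{k+1} = x_k − η·sign(g_k) with constant learning rate η = 1/√(L∞·K), where each g_k is integrable, conditionally unbiased E[g_k ∣ x_0, …, x_k] = ∇L(x_k), and satisfies E[‖g_k − ∇L(x_k)‖₁ ∣ x_0, …, x_k] ≤ θ·‖∇L(x_k)‖₁ almost surely. Then (1/K)·∑_{k=0}^{K−1} E[‖∇L(x_k)‖₁] ≤ (√(L∞) / ((1 − θ)·√K)) · (L(x_0) − L* + 1/2). -/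
open MeasureTheory

/-- The ℓ1 norm on `ℝ^d`. -/
def l1norm {d : ℕ} (v : EuclideanSpace ℝ (Fin d)) : ℝ := ∑ i, |v i|

/-- The ℓ∞ norm on `ℝ^d`. -/
noncomputable def linfnorm {d : ℕ} (v : EuclideanSpace ℝ (Fin d)) : ℝ := ⨆ i, |v i|

/-- The coordinatewise sign map on `ℝ^d`. -/
noncomputable def signVec {d : ℕ} (v : EuclideanSpace ℝ (Fin d)) : EuclideanSpace ℝ (Fin d) :=
  WithLp.toLp 2 (fun i => Real.sign (v i))

/-- The σ-algebra generated by the random vectors `x 0, …, x k`. -/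
def genBy {Ω : Type*} {d : ℕ} (x : ℕ → Ω → EuclideanSpace ℝ (Fin d)) (k : ℕ) :
    MeasurableSpace Ω :=
  ⨆ i ∈ Finset.range (k + 1), MeasurableSpace.comap (x i) inferInstance

section aux
variable {d : ℕ}

lemma l1norm_nonneg (v : EuclideanSpace ℝ (Fin d)) : 0 ≤ l1norm v :=
  Finset.sum_nonneg fun i _ => abs_nonneg _

lemma abs_le_linfnorm (v : EuclideanSpace ℝ (Fin d)) (i : Fin d) : |v i| ≤ linfnorm v :=
  le_ciSup (f := fun i => |v i|) (Set.Finite.bddAbove (Set.finite_range _)) i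

lemma linfnorm_le {v : EuclideanSpace ℝ (Fin d)} {a : ℝ} (h : ∀ i, |v i| ≤ a) (ha : 0 ≤ a) :
    linfnorm v ≤ a := Real.iSup_le h ha

lemma linfnorm_nonneg (v : EuclideanSpace ℝ (Fin d)) : 0 ≤ linfnorm v := by
  rcases isEmpty_or_nonempty (Fin d) with h | h
  · simp [linfnorm, Real.iSup_of_isEmpty]
  · exact le_trans (abs_nonneg _) (abs_le_linfnorm v (Classical.arbitrary _))

lemma inner_eq_sum (u v : EuclideanSpace ℝ (Fin d)) :
    (inner ℝ u v : ℝ) = ∑ i, u i * v i := by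
  simp [PiLp.inner_apply, RCLike.inner_apply, mul_comm]

lemma abs_inner_le (u v : EuclideanSpace ℝ (Fin d)) :
    |(inner ℝ u v : ℝ)| ≤ l1norm u * linfnorm v := by
  rw [inner_eq_sum, l1norm, Finset.sum_mul]
  refine le_trans (Finset.abs_sum_le_sum_abs _ _) (Finset.sum_le_sum fun i _ => ?_)
  rw [abs_mul]
  exact mul_le_mul_of_nonneg_left (abs_le_linfnorm v i) (abs_nonneg _)

lemma l1norm_le_card_norm (v : EuclideanSpace ℝ (Fin d)) : l1norm v ≤ d * ‖v‖ := by
  have h : ∀ i, |v i| ≤ ‖v‖ := by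
    intro i
    have := EuclideanSpace.norm_eq v
    rw [this]
    have : |v i| = Real.sqrt (‖v i‖ ^ 2) := by
      rw [Real.sqrt_sq_eq_abs]; simp
    rw [this]
    apply Real.sqrt_le_sqrt
    exact Finset.single_le_sum (f := fun i => ‖v i‖ ^ 2) (fun i _ => sq_nonneg _) (Finset.mem_univ i)
  calc l1norm v ≤ ∑ _i : Fin d, ‖v‖ := Finset.sum_le_sum fun i _ => h i
    _ = d * ‖v‖ := by simp

lemma sign_ineq (a b : ℝ) : |a| - 2 * |b - a| ≤ a * Real.sign b := by
  rcases lt_trichotomy b 0 with hb | hb | hb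
  · rw [Real.sign_of_neg hb]
    rcases abs_cases a with ⟨h1, h2⟩ | ⟨h1, h2⟩ <;> rcases abs_cases (b - a) with ⟨h3, h4⟩ | ⟨h3, h4⟩ <;> nlinarith
  · subst hb; rw [Real.sign_zero]
    rcases abs_cases a with ⟨h1, h2⟩ | ⟨h1, h2⟩ <;> rcases abs_cases (0 - a) with ⟨h3, h4⟩ | ⟨h3, h4⟩ <;> nlinarith
  · rw [Real.sign_of_pos hb]
    rcases abs_cases a with ⟨h1, h2⟩ | ⟨h1, h2⟩ <;> rcases abs_cases (b - a) with ⟨h3, h4⟩ | ⟨h3, h4⟩ <;> nlinarith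

lemma abs_sign_le (b : ℝ) : |Real.sign b| ≤ 1 := by
  rcases lt_trichotomy b 0 with hb | hb | hb
  · rw [Real.sign_of_neg hb]; norm_num
  · subst hb; rw [Real.sign_zero]; norm_num
  · rw [Real.sign_of_pos hb]; norm_num

lemma inner_signVec_ge (u w : EuclideanSpace ℝ (Fin d)) :
    l1norm u - 2 * l1norm (w - u) ≤ (inner ℝ u (signVec w) : ℝ) := by
  rw [inner_eq_sum, l1norm, l1norm, Finset.mul_sum, ← Finset.sum_sub_distrib]
  refine Finset.sum_le_sum fun i _ => ?_
  have : (w - u) i = w i - u i := rfl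
  rw [this]
  exact sign_ineq (u i) (w i)

end aux

section descent
variable {d : ℕ}

lemma inner_gradient_eq {L : EuclideanSpace ℝ (Fin d) → ℝ} (hL : Differentiable ℝ L)
    (y v : EuclideanSpace ℝ (Fin d)) : (inner ℝ (gradient L y) v : ℝ) = fderiv ℝ L y v := by
  have h := (hL y).hasGradientAt
  have h2 := h.hasFDerivAt
  rw [h2.fderiv]
  simp [InnerProductSpace.toDual_apply_apply]

lemma hasDerivAt_comp_line {L : EuclideanSpace ℝ (Fin d) → ℝ} (hL : Differentiable ℝ L)
    (x v : EuclideanSpace ℝ (Fin d)) (t : ℝ) :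
    HasDerivAt (fun s : ℝ => L (x + s • v)) (inner ℝ (gradient L (x + t • v)) v : ℝ) t := by
  have hline : HasDerivAt (fun s : ℝ => x + s • v) v t := by
    simpa using ((hasDerivAt_id t).smul_const v).const_add x
  have hf : HasFDerivAt L (fderiv ℝ L (x + t • v)) (x + t • v) := (hL _).hasFDerivAt
  have := hf.comp_hasDerivAt t hline
  rwa [inner_gradient_eq hL]

lemma linfnorm_smul_le {c : ℝ} (hc : 0 ≤ c) (v : EuclideanSpace ℝ (Fin d)) :
    linfnorm (c • v) ≤ c * linfnorm v := by
  refine linfnorm_le (fun i => ?_) (mul_nonneg hc (linfnorm_nonneg v))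
  have : (c • v) i = c * v i := rfl
  rw [this, abs_mul, abs_of_nonneg hc]
  exact mul_le_mul_of_nonneg_left (abs_le_linfnorm v i) hc

lemma descent_lemma {L : EuclideanSpace ℝ (Fin d) → ℝ} (hL : Differentiable ℝ L)
    {Linf : ℝ} (hLinf : 0 ≤ Linf)
    (hsmooth : ∀ x y, l1norm (gradient L x - gradient L y) ≤ Linf * linfnorm (x - y))
    (x v : EuclideanSpace ℝ (Fin d)) :
    L (x + v) ≤ L x + (inner ℝ (gradient L x) v : ℝ) + Linf / 2 * (linfnorm v) ^ 2 := by
  set m : ℝ := (inner ℝ (gradient L x) v : ℝ) with hm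
  set C : ℝ := Linf * (linfnorm v) ^ 2 with hC
  set ψ : ℝ → ℝ := fun t => L (x + t • v) - t * m - C * t ^ 2 / 2 with hψdef
  have hψ : ∀ t : ℝ, HasDerivAt ψ ((inner ℝ (gradient L (x + t • v)) v : ℝ) - m - C * t) t := by
    intro t
    have h1 := hasDerivAt_comp_line hL x v t
    have h2 : HasDerivAt (fun s : ℝ => s * m) m t := by simpa using (hasDerivAt_id t).mul_const m
    have h3 : HasDerivAt (fun s : ℝ => C * s ^ 2 / 2) (C * t) t := by
      have := ((hasDerivAt_pow 2 t).const_mul C).div_const 2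
      simpa [mul_comm, mul_assoc, mul_div_assoc] using this
      -- deriv: C * (2 * t ^ 1) / 2 = C * t
    exact (h1.sub h2).sub h3
  have hderiv_nonpos : ∀ t ∈ Set.Ioo (0:ℝ) 1, deriv ψ t ≤ 0 := by
    intro t ht
    rw [(hψ t).deriv]
    have key : (inner ℝ (gradient L (x + t • v)) v : ℝ) - m ≤ C * t := by
      have heq : (inner ℝ (gradient L (x + t • v)) v : ℝ) - m
          = (inner ℝ (gradient L (x + t • v) - gradient L x) v : ℝ) := by
        rw [hm, inner_sub_left]
      rw [heq]
      calc (inner ℝ (gradient L (x + t • v) - gradient L x) v : ℝ)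
          ≤ |(inner ℝ (gradient L (x + t • v) - gradient L x) v : ℝ)| := le_abs_self _
        _ ≤ l1norm (gradient L (x + t • v) - gradient L x) * linfnorm v := abs_inner_le _ _
        _ ≤ (Linf * linfnorm ((x + t • v) - x)) * linfnorm v := by
            exact mul_le_mul_of_nonneg_right (hsmooth _ _) (linfnorm_nonneg v)
        _ ≤ (Linf * (t * linfnorm v)) * linfnorm v := by
            have : (x + t • v) - x = t • v := by abel
            rw [this]
            exact mul_le_mul_of_nonneg_right
              (mul_le_mul_of_nonneg_left (linfnorm_smul_le ht.1.le v) hLinf)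
              (linfnorm_nonneg v)
        _ = C * t := by rw [hC]; ring
    linarith
  have hanti : AntitoneOn ψ (Set.Icc 0 1) := by
    refine antitoneOn_of_deriv_nonpos (convex_Icc 0 1) ?_ ?_ ?_
    · exact fun t _ => ((hψ t).differentiableAt).continuousAt.continuousWithinAt
    · exact fun t _ => ((hψ t).differentiableAt).differentiableWithinAt
    · rw [interior_Icc]; exact hderiv_nonpos
  have h01 := hanti (Set.mem_Icc.mpr ⟨le_refl 0, zero_le_one⟩)
    (Set.mem_Icc.mpr ⟨zero_le_one, le_refl 1⟩) zero_le_one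
  have hψ0 : ψ 0 = L x := by simp [hψdef]
  have hψ1 : ψ 1 = L (x + v) - m - C / 2 := by simp [hψdef]
  rw [hψ0, hψ1] at h01
  linarith
end descent

section aux2
variable {d : ℕ}

lemma sign_eq_ite (c : ℝ) : Real.sign c = if c < 0 then -1 else if 0 < c then 1 else 0 := by
  rcases lt_trichotomy c 0 with h | h | h
  · rw [Real.sign_of_neg h, if_pos h]
  · subst h; rw [Real.sign_zero]; norm_num
  · rw [Real.sign_of_pos h, if_neg (not_lt.mpr h.le), if_pos h]

lemma sign_ineq' (a b : ℝ) :
    |a| - a * Real.sign b ≤ |b - a| + Real.sign a * (a - b) := by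
  rw [sign_eq_ite a, sign_eq_ite b]
  split_ifs <;>
    rcases abs_cases a with ⟨h1, h2⟩ | ⟨h1, h2⟩ <;>
    rcases abs_cases (b - a) with ⟨h3, h4⟩ | ⟨h3, h4⟩ <;> linarith

lemma measurable_realSign : Measurable Real.sign := by
  have : Real.sign = fun r : ℝ => if r < 0 then (-1 : ℝ) else if 0 < r then 1 else 0 := by
    funext r; exact sign_eq_ite r
  rw [this]
  exact Measurable.ite (measurableSet_lt measurable_id measurable_const)
    measurable_const
    (Measurable.ite (measurableSet_lt measurable_const measurable_id)
      measurable_const measurable_const)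

lemma inner_signVec_ge' (u w : EuclideanSpace ℝ (Fin d)) :
    l1norm u - l1norm (w - u) + ∑ i, Real.sign (u i) * (w i - u i)
      ≤ (inner ℝ u (signVec w) : ℝ) := by
  rw [inner_eq_sum, l1norm, l1norm, ← Finset.sum_sub_distrib, ← Finset.sum_add_distrib]
  refine Finset.sum_le_sum fun i _ => ?_
  have h1 : (w - u) i = w i - u i := rfl
  have h2 : signVec w i = Real.sign (w i) := rfl
  rw [h1, h2]
  have h3 := sign_ineq' (u i) (w i)
  have h4 : Real.sign (u i) * (u i - w i) = -(Real.sign (u i) * (w i - u i)) := by ring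
  linarith

end aux2

section aux3
variable {d : ℕ}

lemma continuous_l1norm : Continuous (l1norm (d := d)) := by
  unfold l1norm
  exact continuous_finset_sum _ fun i _ =>
    ((EuclideanSpace.proj (𝕜 := ℝ) i).continuous).abs

lemma integrable_l1norm_comp {Ω : Type*} [MeasurableSpace Ω] {μ : Measure Ω}
    {F : Ω → EuclideanSpace ℝ (Fin d)} (hF : Integrable F μ) :
    Integrable (fun ω => l1norm (F ω)) μ := by
  refine Integrable.mono' (hF.norm.const_mul d) ?_ ?_
  · exact continuous_l1norm.comp_aestronglyMeasurable hF.aestronglyMeasurable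
  · filter_upwards with ω
    rw [Real.norm_eq_abs, abs_of_nonneg (l1norm_nonneg _)]
    exact l1norm_le_card_norm _

lemma measurable_gradient (L : EuclideanSpace ℝ (Fin d) → ℝ) :
    Measurable (gradient L) := by
  unfold gradient
  exact ((InnerProductSpace.toDual ℝ _).symm.continuous.measurable).comp
    (measurable_fderiv ℝ L)

lemma abs_sign_le' (b : ℝ) : |Real.sign b| ≤ 1 := by
  rw [sign_eq_ite b]; split_ifs <;> norm_num

end aux3

/-- SignSGD with adaptive batch sizes, constant learning rate `η = 1/√(Linf·K)`:
`(1/K)·∑_{k<K} E[‖∇L(x_k)‖₁] ≤ (√Linf / ((1 − θ)·√K)) · (L(x₀) − L* + 1/2)`. -/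
theorem stmt7 {d : ℕ} (L : EuclideanSpace ℝ (Fin d) → ℝ) (hL : Differentiable ℝ L)
    (Linf : ℝ) (hLinf_pos : 0 < Linf)
    (hsmooth : ∀ x y, l1norm (gradient L x - gradient L y) ≤ Linf * linfnorm (x - y))
    (Lstar : ℝ) (hinf : IsGLB (Set.range L) Lstar)
    (θ : ℝ) (hθ : θ ∈ Set.Ioo (0 : ℝ) 1) (K : ℕ) (hK : 1 ≤ K)
    {Ω : Type*} [MeasurableSpace Ω] (μ : Measure Ω) [IsProbabilityMeasure μ]
    (x : ℕ → Ω → EuclideanSpace ℝ (Fin d)) (g : ℕ → Ω → EuclideanSpace ℝ (Fin d))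
    (x₀ : EuclideanSpace ℝ (Fin d)) (hx0 : ∀ ω, x 0 ω = x₀)
    (hxmeas : ∀ k, Measurable (x k))
    (hg_int : ∀ k, Integrable (g k) μ)
    (hupdate : ∀ k ω, x (k + 1) ω = x k ω - (Real.sqrt (Linf * K))⁻¹ • signVec (g k ω))
    (hunbiased : ∀ k, μ[g k | genBy x k] =ᵐ[μ] fun ω => gradient L (x k ω))
    (hnoise : ∀ k, ∀ᵐ ω ∂μ,
      (μ[fun ω' => l1norm (g k ω' - gradient L (x k ω')) | genBy x k]) ω
        ≤ θ * l1norm (gradient L (x k ω))) :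
    (K : ℝ)⁻¹ * ∑ k ∈ Finset.range K, ∫ ω, l1norm (gradient L (x k ω)) ∂μ
      ≤ Real.sqrt Linf / ((1 - θ) * Real.sqrt K) * (L x₀ - Lstar + 1 / 2) := by
  obtain ⟨hθ0, hθ1⟩ := hθ
  have hK0 : (0 : ℝ) < K := by exact_mod_cast Nat.lt_of_lt_of_le Nat.zero_lt_one hK
  set η : ℝ := (Real.sqrt (Linf * K))⁻¹ with hηdef
  have hLK : (0 : ℝ) < Linf * K := mul_pos hLinf_pos hK0
  have hsqLK : (0 : ℝ) < Real.sqrt (Linf * K) := Real.sqrt_pos.mpr hLK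
  have hη : 0 < η := inv_pos.mpr hsqLK
  have hη2 : η ^ 2 = (Linf * K)⁻¹ := by
    rw [hηdef, inv_pow, Real.sq_sqrt hLK.le]
  set c : ℝ := Linf / 2 * η ^ 2 with hcdef
  have hc0 : 0 ≤ c := by positivity
  have hLstar_le : ∀ y, Lstar ≤ L y := fun y => hinf.1 ⟨y, rfl⟩
  -- sub σ-algebras
  have hle : ∀ k, genBy x k ≤ (inferInstance : MeasurableSpace Ω) := by
    intro k
    show (⨆ i ∈ Finset.range (k + 1), MeasurableSpace.comap (x i) inferInstance) ≤ _
    exact iSup₂_le fun i _ => (hxmeas i).comap_le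
  -- integrability of gradients
  have hgrad_int : ∀ k, Integrable (fun ω => gradient L (x k ω)) μ := fun k =>
    integrable_condExp.congr (hunbiased k)
  have hG_int : ∀ k, Integrable (fun ω => l1norm (gradient L (x k ω))) μ := fun k =>
    integrable_l1norm_comp (hgrad_int k)
  have hw_int : ∀ k, Integrable (fun ω => g k ω - gradient L (x k ω)) μ := fun k =>
    (hg_int k).sub (hgrad_int k)
  have hF_int : ∀ k, Integrable (fun ω => l1norm (g k ω - gradient L (x k ω))) μ := fun k =>
    integrable_l1norm_comp (hw_int k)
  -- the correction term T
  set T : ℕ → Ω → ℝ := fun k ω =>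
    ∑ i, Real.sign (gradient L (x k ω) i) * (g k ω i - gradient L (x k ω) i) with hTdef
  -- coordinate integrability
  have hwi_int : ∀ k (i : Fin d), Integrable (fun ω => g k ω i - gradient L (x k ω) i) μ :=
    fun k i => (EuclideanSpace.proj (𝕜 := ℝ) i).integrable_comp (hw_int k)
  -- sign of gradient is genBy-measurable
  have hsmeas : ∀ k (i : Fin d),
      StronglyMeasurable[genBy x k] (fun ω => Real.sign (gradient L (x k ω) i)) := by
    intro k i
    have hφ : Measurable (fun y : EuclideanSpace ℝ (Fin d) => Real.sign (gradient L y i)) :=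
      measurable_realSign.comp
        ((EuclideanSpace.proj (𝕜 := ℝ) i).continuous.measurable.comp (measurable_gradient L))
    have hxk : Measurable[MeasurableSpace.comap (x k) inferInstance] (x k) :=
      Measurable.of_comap_le le_rfl
    have h1 : Measurable[MeasurableSpace.comap (x k) inferInstance]
        (fun ω => Real.sign (gradient L (x k ω) i)) := hφ.comp hxk
    have h2 : MeasurableSpace.comap (x k) inferInstance ≤ genBy x k := by
      show _ ≤ ⨆ i ∈ Finset.range (k + 1), MeasurableSpace.comap (x i) inferInstance
      exact le_iSup₂ (f := fun (i : ℕ) (_ : i ∈ Finset.range (k + 1)) =>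
        MeasurableSpace.comap (x i) inferInstance) k (Finset.self_mem_range_succ k)
    exact (h1.mono h2 le_rfl).stronglyMeasurable
  -- products are integrable
  have hprod_int : ∀ k (i : Fin d),
      Integrable (fun ω => Real.sign (gradient L (x k ω) i)
        * (g k ω i - gradient L (x k ω) i)) μ := by
    intro k i
    refine Integrable.mono' (hwi_int k i).abs ?_ ?_
    · exact (((hsmeas k i).mono (hle k)).aestronglyMeasurable).mul
        (hwi_int k i).aestronglyMeasurable
    · filter_upwards with ω
      rw [Real.norm_eq_abs, abs_mul]
      exact mul_le_of_le_one_left (abs_nonneg _) (abs_sign_le' _)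
  have hT_int : ∀ k, Integrable (T k) μ := fun k =>
    integrable_finset_sum _ fun i _ => hprod_int k i
  -- conditional expectation of the error is zero
  have h0 : ∀ k, μ[fun ω => g k ω - gradient L (x k ω) | genBy x k] =ᵐ[μ] 0 := by
    intro k
    have h1 : μ[fun ω => g k ω - gradient L (x k ω) | genBy x k]
        =ᵐ[μ] μ[g k | genBy x k] - μ[fun ω => gradient L (x k ω) | genBy x k] :=
      condExp_sub (hg_int k) (hgrad_int k) _
    have h2 : μ[fun ω => gradient L (x k ω) | genBy x k]
        =ᵐ[μ] fun ω => gradient L (x k ω) := by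
      have h3 := condExp_congr_ae (m := genBy x k) (μ := μ) (hunbiased k).symm
      have h4 := condExp_condExp_of_le (le_refl (genBy x k)) (hle k) (f := g k) (μ := μ)
      exact h3.trans (h4.trans (hunbiased k))
    filter_upwards [h1, h2, hunbiased k] with ω hω1 hω2 hω3
    rw [hω1, Pi.sub_apply, hω2, hω3]
    simp
  -- coordinate version
  have h0i : ∀ k (i : Fin d),
      μ[fun ω => g k ω i - gradient L (x k ω) i | genBy x k] =ᵐ[μ] 0 := by
    intro k i
    refine ((ae_eq_condExp_of_forall_setIntegral_eq (hle k) (hwi_int k i)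
      (fun s _ _ => (integrable_zero _ _ _).integrableOn) ?_
      (stronglyMeasurable_const.aestronglyMeasurable))).symm
    intro s hs hμs
    have hint0 : ∫ ω in s, (μ[fun ω => g k ω - gradient L (x k ω) | genBy x k]) ω ∂μ = 0 := by
      rw [integral_eq_zero_of_ae (ae_restrict_of_ae (h0 k))]
    have hint1 : ∫ ω in s, (g k ω - gradient L (x k ω)) ∂μ = 0 := by
      rw [← setIntegral_condExp (hle k) (hw_int k) hs, hint0]
    have h7 : ∫ ω in s, (EuclideanSpace.proj (𝕜 := ℝ) i) (g k ω - gradient L (x k ω)) ∂μ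
        = 0 := by
      rw [ContinuousLinearMap.integral_comp_comm (EuclideanSpace.proj (𝕜 := ℝ) i)
        ((hw_int k).integrableOn (s := s)), hint1, map_zero]
    simp only [Pi.zero_apply, integral_zero]
    exact h7.symm
  -- expectation of T is zero
  have hT_zero : ∀ k, ∫ ω, T k ω ∂μ = 0 := by
    intro k
    rw [hTdef]
    rw [integral_finset_sum _ fun i _ => hprod_int k i]
    refine Finset.sum_eq_zero fun i _ => ?_
    have hce' : μ[fun ω => Real.sign (gradient L (x k ω) i)
          * (g k ω i - gradient L (x k ω) i) | genBy x k]
        =ᵐ[μ] (fun ω => Real.sign (gradient L (x k ω) i))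
          * μ[fun ω => g k ω i - gradient L (x k ω) i | genBy x k] :=
      condExp_mul_of_stronglyMeasurable_left (μ := μ) (hsmeas k i) (hprod_int k i) (hwi_int k i)
    have hzero : μ[fun ω => Real.sign (gradient L (x k ω) i)
        * (g k ω i - gradient L (x k ω) i) | genBy x k] =ᵐ[μ] 0 := by
      filter_upwards [hce', h0i k i] with ω hω1 hω2
      rw [hω1, Pi.mul_apply, hω2]
      simp
    rw [← integral_condExp (hle k)
      (f := fun ω => Real.sign (gradient L (x k ω) i) * (g k ω i - gradient L (x k ω) i))]
    rw [integral_eq_zero_of_ae hzero]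
  -- pointwise master inequality
  have hmaster : ∀ k ω, L (x (k + 1) ω) ≤ L (x k ω) - η * l1norm (gradient L (x k ω))
      + η * l1norm (g k ω - gradient L (x k ω)) - η * T k ω + c := by
    intro k ω
    have hup : x (k + 1) ω = x k ω + (-(η • signVec (g k ω))) := by
      rw [hupdate k ω, sub_eq_add_neg, hηdef]
    rw [hup]
    have hd := descent_lemma hL hLinf_pos.le hsmooth (x k ω) (-(η • signVec (g k ω)))
    have hinner : (inner ℝ (gradient L (x k ω)) (-(η • signVec (g k ω))) : ℝ)
        = -(η * (inner ℝ (gradient L (x k ω)) (signVec (g k ω)) : ℝ)) := by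
      rw [inner_neg_right, real_inner_smul_right]
    have hsign := inner_signVec_ge' (gradient L (x k ω)) (g k ω)
    have hTk : T k ω = ∑ i, Real.sign (gradient L (x k ω) i)
        * (g k ω i - gradient L (x k ω) i) := rfl
    have hlinf : linfnorm (-(η • signVec (g k ω))) ≤ η := by
      refine linfnorm_le (fun i => ?_) hη.le
      have h5 : (-(η • signVec (g k ω))) i = -(η * Real.sign (g k ω i)) := rfl
      rw [h5, abs_neg, abs_mul, abs_of_nonneg hη.le]
      exact mul_le_of_le_one_right hη.le (abs_sign_le' _)
    have hsq_le : (linfnorm (-(η • signVec (g k ω)))) ^ 2 ≤ η ^ 2 :=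
      pow_le_pow_left₀ (linfnorm_nonneg _) hlinf 2
    have hquad : Linf / 2 * (linfnorm (-(η • signVec (g k ω)))) ^ 2 ≤ c := by
      rw [hcdef]
      exact mul_le_mul_of_nonneg_left hsq_le (by positivity)
    have hinner_le : (inner ℝ (gradient L (x k ω)) (-(η • signVec (g k ω))) : ℝ)
        ≤ -η * l1norm (gradient L (x k ω))
          + η * l1norm (g k ω - gradient L (x k ω)) - η * T k ω := by
      rw [hinner, hTk]
      have := mul_le_mul_of_nonneg_left hsign hη.le
      nlinarith [this]
    linarith [hd, hinner_le, hquad]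
  -- integrability of L ∘ x k
  have hLx_int : ∀ k, Integrable (fun ω => L (x k ω)) μ := by
    intro k
    induction k with
    | zero =>
      have : (fun ω => L (x 0 ω)) = fun _ => L x₀ := by funext ω; rw [hx0]
      rw [this]; exact integrable_const _
    | succ k ih =>
      have hmeasL : AEStronglyMeasurable (fun ω => L (x (k + 1) ω)) μ :=
        (hL.continuous.measurable.comp (hxmeas (k + 1))).aestronglyMeasurable
      refine Integrable.mono'
        (((ih.abs.add ((hF_int k).const_mul η)).add ((hT_int k).abs.const_mul η)).add
          (integrable_const (|c| + |Lstar|))) hmeasL ?_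
      filter_upwards with ω
      have h1 := hmaster k ω
      have h2 := hLstar_le (x (k + 1) ω)
      have h3 := l1norm_nonneg (gradient L (x k ω))
      have h4 := l1norm_nonneg (g k ω - gradient L (x k ω))
      have h5 : T k ω ≤ |T k ω| := le_abs_self _
      have h6 : -|T k ω| ≤ T k ω := neg_abs_le _
      have h7 : L (x k ω) ≤ |L (x k ω)| := le_abs_self _
      have h8 : c ≤ |c| := le_abs_self _
      have h9 : Lstar ≥ -|Lstar| := neg_abs_le _
      rw [Real.norm_eq_abs]
      simp only [Pi.add_apply]
      have p1 : 0 ≤ η * l1norm (g k ω - gradient L (x k ω)) := mul_nonneg hη.le h4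
      have p2 : 0 ≤ η * |T k ω| := mul_nonneg hη.le (abs_nonneg _)
      have p3 := mul_le_mul_of_nonneg_left h6 hη.le
      have p4 : 0 ≤ η * l1norm (gradient L (x k ω)) := mul_nonneg hη.le h3
      have p5 : 0 ≤ |L (x k ω)| := abs_nonneg _
      have p6 : 0 ≤ |c| := abs_nonneg _
      have p7 : 0 ≤ |Lstar| := abs_nonneg _
      rcases abs_cases (L (x (k + 1) ω)) with ⟨he, _⟩ | ⟨he, _⟩ <;> rw [he] <;> linarith
  -- expectation step
  have hstep : ∀ k, η * (1 - θ) * ∫ ω, l1norm (gradient L (x k ω)) ∂μ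
      ≤ (∫ ω, L (x k ω) ∂μ) - (∫ ω, L (x (k + 1) ω) ∂μ) + c := by
    intro k
    have hFle : ∫ ω, l1norm (g k ω - gradient L (x k ω)) ∂μ
        ≤ θ * ∫ ω, l1norm (gradient L (x k ω)) ∂μ := by
      rw [← integral_condExp (hle k)
        (f := fun ω' => l1norm (g k ω' - gradient L (x k ω')))]
      calc ∫ ω, (μ[fun ω' => l1norm (g k ω' - gradient L (x k ω')) | genBy x k]) ω ∂μ
          ≤ ∫ ω, θ * l1norm (gradient L (x k ω)) ∂μ :=
            integral_mono_ae integrable_condExp ((hG_int k).const_mul θ) (hnoise k)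
        _ = θ * ∫ ω, l1norm (gradient L (x k ω)) ∂μ := integral_const_mul θ _
    have IA : Integrable (fun ω => L (x k ω) - η * l1norm (gradient L (x k ω))) μ := by
      exact (hLx_int k).sub ((hG_int k).const_mul η)
    have IB : Integrable (fun ω => L (x k ω) - η * l1norm (gradient L (x k ω))
        + η * l1norm (g k ω - gradient L (x k ω))) μ := by
      exact IA.add ((hF_int k).const_mul η)
    have IC : Integrable (fun ω => L (x k ω) - η * l1norm (gradient L (x k ω))
        + η * l1norm (g k ω - gradient L (x k ω)) - η * T k ω) μ := by
      exact IB.sub ((hT_int k).const_mul η)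
    have IT : Integrable (fun ω => η * T k ω) μ := by exact (hT_int k).const_mul η
    have IG : Integrable (fun ω => η * l1norm (gradient L (x k ω))) μ := by
      exact (hG_int k).const_mul η
    have IF : Integrable (fun ω => η * l1norm (g k ω - gradient L (x k ω))) μ := by
      exact (hF_int k).const_mul η
    have hint : ∫ ω, L (x (k + 1) ω) ∂μ
        ≤ ∫ ω, (L (x k ω) - η * l1norm (gradient L (x k ω))
          + η * l1norm (g k ω - gradient L (x k ω)) - η * T k ω + c) ∂μ :=
      integral_mono (hLx_int (k + 1)) (IC.add (integrable_const c)) (fun ω => hmaster k ω)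
    have hsplit : ∫ ω, (L (x k ω) - η * l1norm (gradient L (x k ω))
          + η * l1norm (g k ω - gradient L (x k ω)) - η * T k ω + c) ∂μ
        = (∫ ω, L (x k ω) ∂μ) - η * (∫ ω, l1norm (gradient L (x k ω)) ∂μ)
          + η * (∫ ω, l1norm (g k ω - gradient L (x k ω)) ∂μ) - η * (∫ ω, T k ω ∂μ) + c := by
      rw [integral_add IC (integrable_const c), integral_sub IB IT, integral_add IA IF,
          integral_sub (hLx_int k) IG,
          integral_const_mul, integral_const_mul, integral_const_mul, integral_const]
      simp [measure_univ]
    rw [hsplit, hT_zero k] at hint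
    have := mul_le_mul_of_nonneg_left hFle hη.le
    nlinarith [this]
  -- telescoping sum
  set S : ℝ := ∑ k ∈ Finset.range K, ∫ ω, l1norm (gradient L (x k ω)) ∂μ with hSdef
  have ha0 : ∫ ω, L (x 0 ω) ∂μ = L x₀ := by
    have : (fun ω => L (x 0 ω)) = fun _ => L x₀ := by funext ω; rw [hx0]
    rw [this, integral_const]
    simp [measure_univ]
  have haK : Lstar ≤ ∫ ω, L (x K ω) ∂μ := by
    have : Lstar = ∫ _ω, Lstar ∂μ := by rw [integral_const]; simp [measure_univ]
    rw [this]
    exact integral_mono (integrable_const Lstar) (hLx_int K) (fun ω => hLstar_le _)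
  have hsum : η * (1 - θ) * S ≤ L x₀ - Lstar + K * c := by
    have h1 : η * (1 - θ) * S
        = ∑ k ∈ Finset.range K, η * (1 - θ) * ∫ ω, l1norm (gradient L (x k ω)) ∂μ := by
      rw [hSdef, Finset.mul_sum]
    have h2 : ∑ k ∈ Finset.range K, η * (1 - θ) * (∫ ω, l1norm (gradient L (x k ω)) ∂μ)
        ≤ ∑ k ∈ Finset.range K,
          ((∫ ω, L (x k ω) ∂μ) - (∫ ω, L (x (k + 1) ω) ∂μ) + c) :=
      Finset.sum_le_sum fun k _ => hstep k
    have h3 : ∑ k ∈ Finset.range K,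
          ((∫ ω, L (x k ω) ∂μ) - (∫ ω, L (x (k + 1) ω) ∂μ) + c)
        = ((∫ ω, L (x 0 ω) ∂μ) - (∫ ω, L (x K ω) ∂μ)) + K * c := by
      rw [Finset.sum_add_distrib, Finset.sum_range_sub' (f := fun k => ∫ ω, L (x k ω) ∂μ)]
      simp [Finset.sum_const, Finset.card_range, nsmul_eq_mul]
    rw [h1]
    calc ∑ k ∈ Finset.range K, η * (1 - θ) * ∫ ω, l1norm (gradient L (x k ω)) ∂μ
        ≤ ((∫ ω, L (x 0 ω) ∂μ) - (∫ ω, L (x K ω) ∂μ)) + K * c := h2.trans (le_of_eq h3)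
      _ ≤ L x₀ - Lstar + K * c := by rw [ha0]; linarith
  have hKc : (K : ℝ) * c = 1 / 2 := by
    rw [hcdef, hη2]
    field_simp
  have hfinal : η * (1 - θ) * S ≤ L x₀ - Lstar + 1 / 2 := by
    rw [hKc] at hsum; exact hsum
  -- final arithmetic
  have hsK : Real.sqrt K * Real.sqrt K = K := Real.mul_self_sqrt hK0.le
  have hsK0 : (0 : ℝ) < Real.sqrt K := Real.sqrt_pos.mpr hK0
  have hsL0 : (0 : ℝ) < Real.sqrt Linf := Real.sqrt_pos.mpr hLinf_pos
  have h1θ : (0 : ℝ) < 1 - θ := by linarith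
  have hkey : Real.sqrt Linf / ((1 - θ) * Real.sqrt K) * (η * (1 - θ)) = (K : ℝ)⁻¹ := by
    rw [hηdef, Real.sqrt_mul hLinf_pos.le]
    have h2 : ((1 - θ) : ℝ) ≠ 0 := ne_of_gt h1θ
    have h3 : Real.sqrt Linf ≠ 0 := ne_of_gt hsL0
    have h5 : Real.sqrt K ≠ 0 := ne_of_gt hsK0
    have h4 : (K : ℝ) ≠ 0 := ne_of_gt hK0
    field_simp
    linear_combination (-1 : ℝ) * hsK
  calc (K : ℝ)⁻¹ * S
      = Real.sqrt Linf / ((1 - θ) * Real.sqrt K) * (η * (1 - θ) * S) := by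
        rw [← mul_assoc, hkey]
    _ ≤ Real.sqrt Linf / ((1 - θ) * Real.sqrt K) * (L x₀ - Lstar + 1 / 2) := by
        exact mul_le_mul_of_nonneg_left hfinal (by positivity)
end
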